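/- Let R be a commutative F_p-algebra, λ ∈ R, A = R[X,Y]/(X^p,Y^p) with the Hopf structure Δ(X)=X⊗1+(1+λX)⊗X, Δ(Y)=Y⊗1+(1+λX)⊗Y. Order the monomial basis e_{1+r₁+p·r₂} = X^{r₁}Y^{r₂} (0 ≤ r₁,r₂ ≤ p−1). Then the matrix of right multiplication operators in the regular representation (defined by Δ(e_j) = Σ_i e_i ⊗ R_{ij}) is upper triangular with i-th diagonal entry Σ_{k=0}^{r} C(r,k) λ^k X^k, where r ≡ i−1 (mod p), 0 ≤ r ≤ p−1. In particular, its determinant equals Π_{r=0}^{p−1} (Σ_{k=0}^{r} C(r,k) λ^k X^k)^p = Π_{r=0}^{p−1} ((1+λX)^r)^p. -/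

import Mathlib

open scoped TensorProduct

noncomputable section
set_option synthInstance.maxHeartbeats 1000000
set_option maxHeartbeats 1000000

/-- The Hopf algebra `A = R[X,Y]/(X^p, Y^p)` of `G^{(λ)}_R`. -/
abbrev Aq (p : ℕ) (R : Type*) [CommRing R] : Type _ :=
  MvPolynomial (Fin 2) R ⧸
    Ideal.span ({MvPolynomial.X 0 ^ p, MvPolynomial.X 1 ^ p} :
      Set (MvPolynomial (Fin 2) R))

/-- The class of `X` in `A`. -/
def aX (p : ℕ) (R : Type*) [CommRing R] : Aq p R :=
  Ideal.Quotient.mk _ (MvPolynomial.X 0)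

/-- The class of `Y` in `A`. -/
def aY (p : ℕ) (R : Type*) [CommRing R] : Aq p R :=
  Ideal.Quotient.mk _ (MvPolynomial.X 1)

/-- The basis monomial `e_{1+r₁+p·r₂} = X^{r₁}Y^{r₂}` of `A`. -/
def eMon (p : ℕ) (R : Type*) [CommRing R] (r : Fin p × Fin p) : Aq p R :=
  aX p R ^ (r.1 : ℕ) * aY p R ^ (r.2 : ℕ)

namespace Stmt9Aux

variable {p : ℕ} {R : Type*} [CommRing R]

/-- the exponent finsupp of the monomial `X^m Y^n` -/
def dIdx (m n : ℕ) : Fin 2 →₀ ℕ := Finsupp.single 0 m + Finsupp.single 1 n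

lemma dIdx_eq_iff {m n m' n' : ℕ} : dIdx m n = dIdx m' n' ↔ m = m' ∧ n = n' := by
  constructor
  · intro h
    constructor
    · have := DFunLike.congr_fun h (0 : Fin 2)
      simpa [dIdx, Finsupp.single_apply] using this
    · have := DFunLike.congr_fun h (1 : Fin 2)
      simpa [dIdx, Finsupp.single_apply] using this
  · rintro ⟨rfl, rfl⟩; rfl

lemma X_pow_mul_X_pow (m n : ℕ) :
    (MvPolynomial.X 0 ^ m * MvPolynomial.X 1 ^ n : MvPolynomial (Fin 2) R)
      = MvPolynomial.monomial (dIdx m n) 1 := by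
  rw [MvPolynomial.X_pow_eq_monomial, MvPolynomial.X_pow_eq_monomial,
    MvPolynomial.monomial_mul, dIdx, one_mul]

def coordAux (p : ℕ) (R : Type*) [CommRing R] (i : Fin p × Fin p) :
    MvPolynomial (Fin 2) R →ₗ[R] R where
  toFun f := MvPolynomial.coeff (dIdx (i.1 : ℕ) (i.2 : ℕ)) f
  map_add' f g := MvPolynomial.coeff_add _ f g
  map_smul' c f := MvPolynomial.coeff_smul _ c f

lemma coordAux_vanish (i : Fin p × Fin p) (f : MvPolynomial (Fin 2) R)
    (hf : f ∈ Ideal.span ({MvPolynomial.X 0 ^ p, MvPolynomial.X 1 ^ p} :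
      Set (MvPolynomial (Fin 2) R))) : coordAux p R i f = 0 := by
  rw [Ideal.mem_span_pair] at hf
  obtain ⟨u, v, rfl⟩ := hf
  have h0 : ¬ (Finsupp.single (0 : Fin 2) p ≤ dIdx (i.1 : ℕ) (i.2 : ℕ)) := by
    intro h
    have := h 0
    simp [dIdx, Finsupp.single_apply] at this
    omega
  have h1 : ¬ (Finsupp.single (1 : Fin 2) p ≤ dIdx (i.1 : ℕ) (i.2 : ℕ)) := by
    intro h
    have := h 1
    simp [dIdx, Finsupp.single_apply] at this
    omega
  simp only [coordAux, LinearMap.coe_mk, AddHom.coe_mk, MvPolynomial.coeff_add]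
  rw [MvPolynomial.X_pow_eq_monomial, MvPolynomial.X_pow_eq_monomial,
    MvPolynomial.coeff_mul_monomial', MvPolynomial.coeff_mul_monomial',
    if_neg h0, if_neg h1, add_zero]

/-- the coordinate functional on the quotient -/
def coordQ (p : ℕ) (R : Type*) [CommRing R] (i : Fin p × Fin p) : Aq p R →ₗ[R] R :=
  (Submodule.liftQ (Submodule.restrictScalars R (Ideal.span
      ({MvPolynomial.X 0 ^ p, MvPolynomial.X 1 ^ p} : Set (MvPolynomial (Fin 2) R))))
    (coordAux p R i) (fun f hf => coordAux_vanish i f hf)) ∘ₗ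
  (Submodule.Quotient.restrictScalarsEquiv R (Ideal.span
      ({MvPolynomial.X 0 ^ p, MvPolynomial.X 1 ^ p} : Set (MvPolynomial (Fin 2) R)))).symm.toLinearMap

lemma coordQ_mk (i : Fin p × Fin p) (f : MvPolynomial (Fin 2) R) :
    coordQ p R i (Ideal.Quotient.mk _ f) = MvPolynomial.coeff (dIdx (i.1 : ℕ) (i.2 : ℕ)) f := rfl

lemma coordQ_monomial (i : Fin p × Fin p) (m n : ℕ) :
    coordQ p R i (aX p R ^ m * aY p R ^ n) =
      if m = (i.1 : ℕ) ∧ n = (i.2 : ℕ) then 1 else 0 := by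
  have : (aX p R ^ m * aY p R ^ n) = Ideal.Quotient.mk _
      (MvPolynomial.X 0 ^ m * MvPolynomial.X 1 ^ n) := by
    simp [aX, aY]
  rw [this, coordQ_mk, X_pow_mul_X_pow, MvPolynomial.coeff_monomial]
  simp [dIdx_eq_iff, eq_comm]

section
variable {A : Type*} [CommRing A] [Algebra R A]

/-- evaluation of first slot against a functional -/
def Fev (c : A →ₗ[R] R) : A ⊗[R] A →ₗ[R] A :=
  TensorProduct.lift ((LinearMap.lsmul R A).comp c)

@[simp] lemma Fev_tmul (c : A →ₗ[R] R) (x y : A) : Fev c (x ⊗ₜ[R] y) = c x • y := rfl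

lemma pick_sum (n c m : ℕ) (g : ℕ → R) :
    (∑ k ∈ Finset.range n, g k * (if c + k = m then 1 else 0)) =
      if c ≤ m ∧ m - c < n then g (m - c) else 0 := by
  by_cases hc : c ≤ m
  · have : ∀ k, (c + k = m) ↔ (k = m - c) := by intro k; omega
    simp only [this, mul_ite, mul_one, mul_zero]
    rw [Finset.sum_ite_eq' (Finset.range n) (m - c) g]
    simp [hc, Finset.mem_range]
  · have : ∀ k, ¬ (c + k = m) := by intro k; omega
    simp [this, hc]

lemma expand_pow (u z w : A) (a : ℕ) :
    (z ⊗ₜ[R] 1 + u ⊗ₜ[R] w) ^ a =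
      ∑ s ∈ Finset.range (a + 1),
        (a.choose s : ℕ) • ((u ^ s * z ^ (a - s)) ⊗ₜ[R] (w ^ s)) := by
  rw [add_comm, add_pow]
  refine Finset.sum_congr rfl fun s _ => ?_
  rw [Algebra.TensorProduct.tmul_pow, Algebra.TensorProduct.tmul_pow,
    Algebra.TensorProduct.tmul_mul_tmul, one_pow, mul_one, nsmul_eq_mul, mul_comm]

lemma Fev_prod (c : A →ₗ[R] R) (n1 n2 : ℕ) (C1 C2 : ℕ → ℕ) (L1 L2 Q1 Q2 : ℕ → A) :
    Fev c ((∑ s ∈ Finset.range n1, C1 s • (L1 s ⊗ₜ[R] Q1 s)) *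
           (∑ t ∈ Finset.range n2, C2 t • (L2 t ⊗ₜ[R] Q2 t))) =
    ∑ s ∈ Finset.range n1, ∑ t ∈ Finset.range n2,
      (((C1 s * C2 t : ℕ) : R) * c (L1 s * L2 t)) • (Q1 s * Q2 t) := by
  rw [Finset.sum_mul_sum, map_sum]
  refine Finset.sum_congr rfl fun s _ => ?_
  rw [map_sum]
  refine Finset.sum_congr rfl fun t _ => ?_
  rw [smul_mul_smul_comm, Algebra.TensorProduct.tmul_mul_tmul, map_nsmul, Fev_tmul,
    ← Nat.cast_smul_eq_nsmul R, smul_smul]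

end

lemma smul_def' (r : R) (x : Aq p R) : r • x = algebraMap R (Aq p R) r * x :=
  Algebra.smul_def r x

/-- `u = 1 + λ X` -/
def uEl (p : ℕ) (R : Type*) [CommRing R] (lam : R) : Aq p R :=
  1 + algebraMap R (Aq p R) lam * aX p R

lemma uEl_pow (lam : R) (n : ℕ) :
    uEl p R lam ^ n =
      ∑ k ∈ Finset.range (n + 1), ((n.choose k : R) * lam ^ k) • aX p R ^ k := by
  rw [uEl, add_comm, add_pow]
  refine Finset.sum_congr rfl fun k _ => ?_
  simp only [one_pow, mul_one, mul_pow, smul_def', map_mul, map_natCast, map_pow]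
  ring

lemma coordQ_uEl (lam : R) (i : Fin p × Fin p) (n c d : ℕ) :
    coordQ p R i (uEl p R lam ^ n * aX p R ^ c * aY p R ^ d) =
      if c ≤ (i.1 : ℕ) ∧ d = (i.2 : ℕ) then
        (n.choose ((i.1 : ℕ) - c) : R) * lam ^ ((i.1 : ℕ) - c)
      else 0 := by
  rw [uEl_pow, Finset.sum_mul, Finset.sum_mul, map_sum]
  have hterm : ∀ k, coordQ p R i ((((n.choose k : R) * lam ^ k) • aX p R ^ k)
      * aX p R ^ c * aY p R ^ d)
      = ((n.choose k : R) * lam ^ k) *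
        (if c + k = (i.1 : ℕ) ∧ d = (i.2 : ℕ) then 1 else 0) := by
    intro k
    rw [smul_mul_assoc, smul_mul_assoc, map_smul, smul_eq_mul, mul_assoc,
      ← pow_add, ← mul_assoc]
    rw [show k + c = c + k from add_comm _ _]  -- pow order
    rw [coordQ_monomial]
  simp only [hterm]
  by_cases hd : d = (i.2 : ℕ)
  · simp only [hd, and_true]
    rw [pick_sum (n + 1) c (i.1 : ℕ) (fun k => (n.choose k : R) * lam ^ k)]
    by_cases hc : c ≤ (i.1 : ℕ)
    · by_cases hlt : (i.1 : ℕ) - c < n + 1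
      · simp [hc, hlt]
      · rw [if_neg (by tauto), if_pos (by tauto)]
        rw [Nat.choose_eq_zero_of_lt (by omega)]
        simp
    · simp [hc]
  · simp [hd]

/-- the scalar entries -/
def scal (lam : R) (r1 r2 a b s t : ℕ) : R :=
  if a - s ≤ r1 ∧ b - t = r2 then
    ((a.choose s * b.choose t * (s + t).choose (r1 - (a - s)) : ℕ) : R)
      * lam ^ (r1 - (a - s))
  else 0

lemma coordQ_eMon (i i' : Fin p × Fin p) :
    coordQ p R i (eMon p R i') = if i' = i then (1 : R) else 0 := by
  rw [eMon, coordQ_monomial]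
  have h : ((i'.1 : ℕ) = (i.1 : ℕ) ∧ (i'.2 : ℕ) = (i.2 : ℕ)) ↔ i' = i := by
    simp [Prod.ext_iff, Fin.ext_iff]
  rw [if_congr h rfl rfl]

lemma Mform {lam : R}
    (Δ : Aq p R →ₐ[R] Aq p R ⊗[R] Aq p R)
    (hΔX : Δ (aX p R) = aX p R ⊗ₜ 1 + uEl p R lam ⊗ₜ (aX p R))
    (hΔY : Δ (aY p R) = aY p R ⊗ₜ 1 + uEl p R lam ⊗ₜ (aY p R))
    (M : Matrix (Fin p × Fin p) (Fin p × Fin p) (Aq p R))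
    (hM : ∀ j, Δ (eMon p R j) = ∑ i, eMon p R i ⊗ₜ[R] M i j) (i j : Fin p × Fin p) :
    M i j = ∑ s ∈ Finset.range ((j.1 : ℕ) + 1), ∑ t ∈ Finset.range ((j.2 : ℕ) + 1),
      scal lam (i.1 : ℕ) (i.2 : ℕ) (j.1 : ℕ) (j.2 : ℕ) s t • (aX p R ^ s * aY p R ^ t) := by
  have hF : Fev (coordQ p R i) (Δ (eMon p R j)) = M i j := by
    rw [hM j, map_sum]
    simp only [Fev_tmul, coordQ_eMon, ite_smul, one_smul, zero_smul]
    rw [Finset.sum_ite_eq' Finset.univ i]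
    simp
  rw [← hF]
  have hD : Δ (eMon p R j) =
      (∑ s ∈ Finset.range ((j.1 : ℕ) + 1), (Nat.choose (j.1 : ℕ) s) •
        ((uEl p R lam ^ s * aX p R ^ ((j.1 : ℕ) - s)) ⊗ₜ[R] (aX p R ^ s))) *
      (∑ t ∈ Finset.range ((j.2 : ℕ) + 1), (Nat.choose (j.2 : ℕ) t) •
        ((uEl p R lam ^ t * aY p R ^ ((j.2 : ℕ) - t)) ⊗ₜ[R] (aY p R ^ t))) := by
    have _inst : MonoidHomClass (Aq p R →ₐ[R] Aq p R ⊗[R] Aq p R) (Aq p R) (Aq p R ⊗[R] Aq p R) :=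
      @RingHomClass.toMonoidHomClass _ _ _ _ _ _ (@AlgHomClass.toRingHomClass _ R _ _ _ _ _ _ _ _ _)
    rw [eMon, map_mul, map_pow, map_pow, hΔX, hΔY, expand_pow, expand_pow]
  rw [hD]
  rw [Fev_prod (coordQ p R i) ((j.1 : ℕ) + 1) ((j.2 : ℕ) + 1)
    (fun s => Nat.choose (j.1 : ℕ) s) (fun t => Nat.choose (j.2 : ℕ) t)
    (fun s => uEl p R lam ^ s * aX p R ^ ((j.1 : ℕ) - s))
    (fun t => uEl p R lam ^ t * aY p R ^ ((j.2 : ℕ) - t))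
    (fun s => aX p R ^ s) (fun t => aY p R ^ t)]
  refine Finset.sum_congr rfl fun s hs => ?_
  refine Finset.sum_congr rfl fun t ht => ?_
  have hL : (uEl p R lam ^ s * aX p R ^ ((j.1 : ℕ) - s)) *
      (uEl p R lam ^ t * aY p R ^ ((j.2 : ℕ) - t)) =
      uEl p R lam ^ (s + t) * aX p R ^ ((j.1 : ℕ) - s) * aY p R ^ ((j.2 : ℕ) - t) := by
    rw [pow_add]; ring
  rw [hL, coordQ_uEl]
  congr 1
  rw [scal]
  split_ifs with hcond
  · push_cast
    ring
  · simp

end Stmt9Aux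

/-- the matrix of the right regular representation of
`A = R[X,Y]/(X^p,Y^p)` with respect to the ordered monomial basis
`e_{1+r₁+p·r₂} = X^{r₁}Y^{r₂}` is upper triangular with diagonal entries
`Σ_{k=0}^{r} C(r,k)λ^k X^k` (`r ≡ i-1 mod p`), and its determinant equals
`Π_{r=0}^{p-1}(Σ_{k=0}^{r} C(r,k)λ^k X^k)^p = Π_{r=0}^{p-1}((1+λX)^r)^p`. -/
theorem stmt9 (p : ℕ) (hp : p.Prime) (R : Type*) [CommRing R] [CharP R p] (lam : R)
    (Δ : Aq p R →ₐ[R] Aq p R ⊗[R] Aq p R)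
    (hΔX : Δ (aX p R) = aX p R ⊗ₜ 1 +
      (1 + algebraMap R (Aq p R) lam * aX p R) ⊗ₜ aX p R)
    (hΔY : Δ (aY p R) = aY p R ⊗ₜ 1 +
      (1 + algebraMap R (Aq p R) lam * aX p R) ⊗ₜ aY p R)
    (M : Matrix (Fin p × Fin p) (Fin p × Fin p) (Aq p R))
    (hM : ∀ j, Δ (eMon p R j) = ∑ i, eMon p R i ⊗ₜ[R] M i j) :
    -- upper triangular w.r.t. the ordering `i ↦ 1 + r₁ + p·r₂`
    (∀ i j : Fin p × Fin p, (j.1 : ℕ) + p * (j.2 : ℕ) < (i.1 : ℕ) + p * (i.2 : ℕ) →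
      M i j = 0) ∧
    -- diagonal entries
    (∀ i : Fin p × Fin p, M i i =
      ∑ k ∈ Finset.range ((i.1 : ℕ) + 1),
        algebraMap R (Aq p R) ((((i.1 : ℕ).choose k : ℕ) : R) * lam ^ k) *
          aX p R ^ k) ∧
    -- the determinant
    M.det = ∏ r ∈ Finset.range p,
      (∑ k ∈ Finset.range (r + 1),
        algebraMap R (Aq p R) (((r.choose k : ℕ) : R) * lam ^ k) * aX p R ^ k) ^ p ∧
    M.det = ∏ r ∈ Finset.range p,
      ((1 + algebraMap R (Aq p R) lam * aX p R) ^ r) ^ p := by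
  classical
  have hMf : ∀ i j : Fin p × Fin p, M i j =
      ∑ s ∈ Finset.range ((j.1 : ℕ) + 1), ∑ t ∈ Finset.range ((j.2 : ℕ) + 1),
        Stmt9Aux.scal lam (i.1 : ℕ) (i.2 : ℕ) (j.1 : ℕ) (j.2 : ℕ) s t •
          (aX p R ^ s * aY p R ^ t) :=
    fun i j => Stmt9Aux.Mform Δ hΔX hΔY M hM i j
  have part1 : ∀ i j : Fin p × Fin p,
      (j.1 : ℕ) + p * (j.2 : ℕ) < (i.1 : ℕ) + p * (i.2 : ℕ) → M i j = 0 := by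
    intro i j hij
    rw [hMf i j]
    refine Finset.sum_eq_zero fun s hs => Finset.sum_eq_zero fun t ht => ?_
    have hs' : s ≤ (j.1 : ℕ) := by
      have := Finset.mem_range.mp hs; omega
    have ht' : t ≤ (j.2 : ℕ) := by
      have := Finset.mem_range.mp ht; omega
    by_cases hg : (j.1 : ℕ) - s ≤ (i.1 : ℕ) ∧ (j.2 : ℕ) - t = (i.2 : ℕ)
    · obtain ⟨h1, h2⟩ := hg
      have hb : (j.2 : ℕ) = (i.2 : ℕ) + t := by omega
      have hmul : p * (j.2 : ℕ) = p * (i.2 : ℕ) + p * t := by rw [hb, Nat.mul_add]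
      have htp : t ≤ p * t := Nat.le_mul_of_pos_left t hp.pos
      have hlt : (j.1 : ℕ) + t < (i.1 : ℕ) := by linarith [hij, hmul, htp]
      rw [Stmt9Aux.scal, if_pos ⟨h1, h2⟩,
        Nat.choose_eq_zero_of_lt (show s + t < (i.1 : ℕ) - ((j.1 : ℕ) - s) by omega)]
      simp
    · rw [Stmt9Aux.scal, if_neg hg, zero_smul]
  have part2 : ∀ i : Fin p × Fin p, M i i =
      ∑ k ∈ Finset.range ((i.1 : ℕ) + 1),
        algebraMap R (Aq p R) ((((i.1 : ℕ).choose k : ℕ) : R) * lam ^ k) *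
          aX p R ^ k := by
    intro i
    rw [hMf i i]
    refine Finset.sum_congr rfl fun s hs => ?_
    have hs' : s ≤ (i.1 : ℕ) := by
      have := Finset.mem_range.mp hs; omega
    rw [Finset.sum_eq_single_of_mem 0 (Finset.mem_range.mpr (Nat.succ_pos _))
      (fun t ht hne => ?_)]
    · rw [Stmt9Aux.scal, if_pos ⟨Nat.sub_le _ _, by omega⟩,
        show (i.1 : ℕ) - ((i.1 : ℕ) - s) = s by omega]
      simp only [Nat.add_zero, Nat.choose_self, Nat.choose_zero_right, mul_one, Nat.mul_one,
        pow_zero, Stmt9Aux.smul_def']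
    · rw [Stmt9Aux.scal, if_neg ?_, zero_smul]
      have := Finset.mem_range.mp ht
      rintro ⟨-, h2⟩
      omega
  set G : ℕ → Aq p R := fun r => ∑ k ∈ Finset.range (r + 1),
      algebraMap R (Aq p R) (((r.choose k : ℕ) : R) * lam ^ k) * aX p R ^ k with hG
  have hdet : M.det = ∏ r ∈ Finset.range p, (G r) ^ p := by
    let e : (Fin p × Fin p) ≃ Fin (p * p) :=
      (Equiv.prodComm (Fin p) (Fin p)).trans finProdFinEquiv
    have he : ∀ i : Fin p × Fin p, ((e i : ℕ)) = (i.1 : ℕ) + p * (i.2 : ℕ) := fun i => rfl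
    have h1 : M.det = (Matrix.reindex e e M).det := (Matrix.det_reindex_self e M).symm
    have htri : (Matrix.reindex e e M).BlockTriangular id := by
      intro x y hxy
      simp only [Matrix.reindex_apply, Matrix.submatrix_apply]
      apply part1
      have hx := he (e.symm x)
      have hy := he (e.symm y)
      rw [Equiv.apply_symm_apply] at hx hy
      rw [← hx, ← hy]
      exact hxy
    rw [h1, Matrix.det_of_upperTriangular htri]
    rw [← Equiv.prod_comp e (fun x => (Matrix.reindex e e M) x x)]
    simp only [Matrix.reindex_apply, Matrix.submatrix_apply, Equiv.symm_apply_apply]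
    have : ∀ i : Fin p × Fin p, M i i = G (i.1 : ℕ) := fun i => part2 i
    rw [Finset.prod_congr rfl fun i _ => this i]
    rw [Fintype.prod_prod_type]
    simp only [Finset.prod_const, Finset.card_univ, Fintype.card_fin]
    exact (Fin.prod_univ_eq_prod_range (fun r => G r ^ p) p).symm ▸ rfl
  have hGu : ∀ r : ℕ, G r = (1 + algebraMap R (Aq p R) lam * aX p R) ^ r := by
    intro r
    rw [show (1 + algebraMap R (Aq p R) lam * aX p R) = Stmt9Aux.uEl p R lam from rfl,
      Stmt9Aux.uEl_pow]
    exact Finset.sum_congr rfl fun k _ => (Stmt9Aux.smul_def' _ _).symm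
  refine ⟨part1, part2, hdet, ?_⟩
  rw [hdet]
  exact Finset.prod_congr rfl fun r _ => by rw [hGu r]
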